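/- arXiv:1303.6665 — 3 statements merged into one kernel-verified Lean document; each statement's English description precedes it below -/
import Mathlib

section
/- Let γ₀ be a symmetric positive definite n×n real matrix (n ≥ 2). Let Z₁ = γ₀^{-1/2}·(Σⱼ tⱼ eⱼ⊗eⱼ)·γ₀^{-1/2} with t₁,…,tₙ pairwise distinct reals, Z₂ = γ₀^{-1/2}·(Σ_{j=1}^{n-1}(eⱼ⊗e_{j+1}+e_{j+1}⊗eⱼ))·γ₀^{-1/2}, and H = γ₀. If a symmetric matrix A satisfies that both A·Z₁·Hᵀ and A·Z₂·Hᵀ are symmetric, then A is a scalar multiple of γ₀. -/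
open Matrix

theorem stmt_4 {n : ℕ} (hn : 2 ≤ n) (γ₀ g : Matrix (Fin n) (Fin n) ℝ)
    (hγ₀ : γ₀.PosDef) (hg : g.PosDef) (hgsq : g * g = γ₀)
    (t : Fin n → ℝ) (ht : ∀ i j : Fin n, i ≠ j → t i ≠ t j)
    (T : Matrix (Fin n) (Fin n) ℝ)
    (hT : T = Matrix.of fun i j : Fin n =>
      if (i : ℕ) + 1 = (j : ℕ) ∨ (j : ℕ) + 1 = (i : ℕ) then (1 : ℝ) else 0)
    (Z₁ Z₂ H : Matrix (Fin n) (Fin n) ℝ)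
    (hZ₁ : Z₁ = g⁻¹ * Matrix.diagonal t * g⁻¹)
    (hZ₂ : Z₂ = g⁻¹ * T * g⁻¹)
    (hH : H = γ₀)
    (A : Matrix (Fin n) (Fin n) ℝ) (hA : A.IsSymm)
    (h1 : (A * Z₁ * Hᵀ).IsSymm) (h2 : (A * Z₂ * Hᵀ).IsSymm) :
    ∃ c : ℝ, A = c • γ₀ := by
  have hgd : IsUnit g.det := isUnit_iff_ne_zero.mpr hg.det_pos.ne'
  have hgi : g⁻¹ * g = 1 := nonsing_inv_mul g hgd
  have hig : g * g⁻¹ = 1 := mul_nonsing_inv g hgd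
  have hgs : gᵀ = g := by
    have := hg.isHermitian.eq
    rwa [conjTranspose_eq_transpose_of_trivial] at this
  have hγs : γ₀ᵀ = γ₀ := by
    have := hγ₀.isHermitian.eq
    rwa [conjTranspose_eq_transpose_of_trivial] at this
  have hgis : (g⁻¹)ᵀ = g⁻¹ := by rw [Matrix.transpose_nonsing_inv, hgs]
  have hAs : Aᵀ = A := hA
  have hTs : Tᵀ = T := by
    subst hT; ext i j; simp [Matrix.transpose_apply, or_comm]
  have c1 : ∀ X : Matrix (Fin n) (Fin n) ℝ, g⁻¹ * (g * X) = X := fun X => by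
    rw [← Matrix.mul_assoc, hgi, Matrix.one_mul]
  have c2 : ∀ X : Matrix (Fin n) (Fin n) ℝ, g * (g⁻¹ * X) = X := fun X => by
    rw [← Matrix.mul_assoc, hig, Matrix.one_mul]
  set B := g⁻¹ * A * g⁻¹ with hB
  -- general lemma: commuting of B with M from symmetry hypothesis
  have comm : ∀ M : Matrix (Fin n) (Fin n) ℝ, Mᵀ = M →
      (A * (g⁻¹ * M * g⁻¹) * Hᵀ).IsSymm → B * M = M * B := by
    intro M hMs hsym
    have e : (A * (g⁻¹ * M * g⁻¹) * Hᵀ)ᵀ = A * (g⁻¹ * M * g⁻¹) * Hᵀ := hsym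
    rw [hH, hγs, ← hgsq] at e
    -- e : (A * (g⁻¹ * M * g⁻¹) * (g * g))ᵀ = A * (g⁻¹ * M * g⁻¹) * (g * g)
    have e2 : g * (M * (g⁻¹ * A)) = A * (g⁻¹ * (M * g)) := by
      calc g * (M * (g⁻¹ * A))
          = (A * (g⁻¹ * M * g⁻¹) * (g * g))ᵀ := by
            simp only [Matrix.transpose_mul, hgs, hgis, hAs, hMs, Matrix.mul_assoc, c1, c2]
        _ = A * (g⁻¹ * M * g⁻¹) * (g * g) := e
        _ = A * (g⁻¹ * (M * g)) := by
            simp only [Matrix.mul_assoc, c1, c2]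
    have : g⁻¹ * (g * (M * (g⁻¹ * A)) * g⁻¹) = g⁻¹ * (A * (g⁻¹ * (M * g)) * g⁻¹) := by
      rw [e2]
    calc B * M = g⁻¹ * (A * (g⁻¹ * (M * g)) * g⁻¹) := by
          simp only [hB, Matrix.mul_assoc, hig, Matrix.mul_one, c1, c2]
      _ = g⁻¹ * (g * (M * (g⁻¹ * A)) * g⁻¹) := this.symm
      _ = M * B := by
          simp only [hB, Matrix.mul_assoc, c1]
  have key1 : B * Matrix.diagonal t = Matrix.diagonal t * B := by
    apply comm _ (Matrix.diagonal_transpose t)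
    rwa [hZ₁] at h1
  have key2 : B * T = T * B := by
    apply comm _ hTs
    rwa [hZ₂] at h2
  -- B is diagonal
  have hBoff : ∀ i j : Fin n, i ≠ j → B i j = 0 := by
    intro i j hij
    have := congrFun (congrFun key1 i) j
    rw [Matrix.mul_diagonal, Matrix.diagonal_mul] at this
    have htij := ht i j hij
    have : B i j * (t j - t i) = 0 := by ring_nf; linarith [this]
    rcases mul_eq_zero.mp this with h | h
    · exact h
    · exact absurd (by linarith : t i = t j) htij
  have hn0 : 0 < n := lt_of_lt_of_le (by norm_num) hn
  set d : Fin n → ℝ := fun i => B i i with hd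
  have hBdiag : B = Matrix.diagonal d := by
    ext i j
    by_cases h : i = j
    · subst h; simp [Matrix.diagonal_apply_eq, hd]
    · rw [Matrix.diagonal_apply_ne _ h]; exact hBoff i j h
  -- adjacent diagonal entries equal
  have hadj : ∀ k : ℕ, ∀ h : k + 1 < n, d ⟨k, Nat.lt_of_succ_lt h⟩ = d ⟨k+1, h⟩ := by
    intro k h
    have := congrFun (congrFun key2 ⟨k, Nat.lt_of_succ_lt h⟩) ⟨k+1, h⟩
    rw [hBdiag, Matrix.diagonal_mul, Matrix.mul_diagonal, hT] at this
    simpa using this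
  have hconst : ∀ k : ℕ, ∀ h : k < n, d ⟨k, h⟩ = d ⟨0, hn0⟩ := by
    intro k
    induction k with
    | zero => intro h; rfl
    | succ m ih => intro h; rw [← hadj m h, ih (Nat.lt_of_succ_lt h)]
  set c := d ⟨0, hn0⟩ with hc
  have hBc : B = c • (1 : Matrix (Fin n) (Fin n) ℝ) := by
    rw [hBdiag]
    ext i j
    by_cases h : i = j
    · subst h
      rw [Matrix.diagonal_apply_eq]
      have := hconst i.1 i.2
      simp only [Fin.eta] at this
      simp [this, hc]
    · simp [Matrix.diagonal_apply_ne _ h, Matrix.one_apply_ne h]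
  have hAeq : A = g * B * g := by
    rw [hB]
    simp only [Matrix.mul_assoc, c1, c2]
    rw [hgi, Matrix.mul_one]
  refine ⟨c, ?_⟩
  rw [hAeq, hBc, ← hgsq]
  simp [Matrix.mul_smul, Matrix.smul_mul]
end

section
/- Let γ : X → GL(n,ℝ) be C¹ with values in symmetric matrices, and let u₁,…,uₙ : X → ℝ be C² functions such that the matrix H with columns Hⱼ = γ∇uⱼ is invertible at each point. Write H^{jl} for the entries of H^{-1} and γ^{pl} for the entries of γ^{-1}. Then for all 1 ≤ l ≤ n and 1 ≤ p < q ≤ n, ∂_q γ^{pl} − ∂_p γ^{ql} = Σ_{i,j} H^{il} (γ^{qj} ∂_p H_{ji} − γ^{pj} ∂_q H_{ji}). -/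
open Matrix

/-- Partial derivative in the `i`-th coordinate direction. -/
noncomputable def pd {n : ℕ} (i : Fin n) (f : (Fin n → ℝ) → ℝ)
    (x : Fin n → ℝ) : ℝ :=
  fderiv ℝ f x (Pi.single i 1)

section aux

variable {n : ℕ}

lemma diffAt_prod {ι : Type*} (t : Finset ι) {f : ι → (Fin n → ℝ) → ℝ}
    {x : Fin n → ℝ} (h : ∀ i ∈ t, DifferentiableAt ℝ (f i) x) :
    DifferentiableAt ℝ (fun y => ∏ i ∈ t, f i y) x := by
  classical
  induction t using Finset.induction with
  | empty => simpa using differentiableAt_const (1 : ℝ)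
  | @insert a t ha ih =>
    simp only [Finset.prod_insert ha]
    exact (h a (Finset.mem_insert_self a t)).mul
      (ih fun i hi => h i (Finset.mem_insert_of_mem hi))

lemma diffAt_det {A : (Fin n → ℝ) → Matrix (Fin n) (Fin n) ℝ} {x : Fin n → ℝ}
    (h : ∀ i j, DifferentiableAt ℝ (fun y => A y i j) x) :
    DifferentiableAt ℝ (fun y => (A y).det) x := by
  simp only [Matrix.det_apply']
  exact DifferentiableAt.fun_sum fun σ _ =>
    DifferentiableAt.const_mul (diffAt_prod Finset.univ fun i _ => h (σ i) i) _

lemma diffAt_inv_entry {A : (Fin n → ℝ) → Matrix (Fin n) (Fin n) ℝ} {x : Fin n → ℝ}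
    (h : ∀ i j, DifferentiableAt ℝ (fun y => A y i j) x)
    (hdet : (A x).det ≠ 0) (i j : Fin n) :
    DifferentiableAt ℝ (fun y => (A y)⁻¹ i j) x := by
  have key : (fun y => (A y)⁻¹ i j)
      = fun y => ((A y).det)⁻¹ * ((A y).updateRow j (Pi.single i 1)).det := by
    funext y
    rw [Matrix.inv_def, Matrix.smul_apply, Matrix.adjugate_apply, Ring.inverse_eq_inv']
    rfl
  rw [key]
  refine ((diffAt_det h).inv hdet).mul (diffAt_det fun a b => ?_)
  simp only [Matrix.updateRow_apply]
  split
  · exact differentiableAt_const _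
  · exact h _ _

lemma pd_congr_nhds {i : Fin n} {f g : (Fin n → ℝ) → ℝ} {x : Fin n → ℝ}
    (h : f =ᶠ[nhds x] g) : pd i f x = pd i g x := by
  unfold pd; rw [h.fderiv_eq]

lemma pd_sum {i : Fin n} {ι : Type*} (t : Finset ι) {f : ι → (Fin n → ℝ) → ℝ}
    {x : Fin n → ℝ} (h : ∀ j ∈ t, DifferentiableAt ℝ (f j) x) :
    pd i (fun y => ∑ j ∈ t, f j y) x = ∑ j ∈ t, pd i (f j) x := by
  unfold pd; rw [fderiv_fun_sum h]; simp

lemma pd_mul {i : Fin n} {f g : (Fin n → ℝ) → ℝ} {x : Fin n → ℝ}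
    (hf : DifferentiableAt ℝ f x) (hg : DifferentiableAt ℝ g x) :
    pd i (fun y => f y * g y) x = pd i f x * g x + f x * pd i g x := by
  unfold pd; rw [fderiv_fun_mul hf hg]; simp; ring

lemma pd_pd_comm {f : (Fin n → ℝ) → ℝ} {x : Fin n → ℝ}
    (hf : ContDiffAt ℝ 2 f x) (p q : Fin n) :
    pd q (fun y => pd p f y) x = pd p (fun y => pd q f y) x := by
  have hdf : DifferentiableAt ℝ (fderiv ℝ f) x :=
    (hf.fderiv_right (m := 1) (by norm_num)).differentiableAt one_ne_zero
  have key : ∀ (v w : Fin n → ℝ),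
      fderiv ℝ (fun y => fderiv ℝ f y v) x w = fderiv ℝ (fderiv ℝ f) x w v := by
    intro v w
    rw [fderiv_clm_apply hdf (differentiableAt_const v)]
    simp
  unfold pd
  rw [key, key]
  exact hf.isSymmSndFDerivAt (by simp [minSmoothness_of_isRCLikeNormedField]) _ _

end aux

theorem stmt_15 {n : ℕ} (s : Set (Fin n → ℝ)) (hs : IsOpen s)
    (γ : (Fin n → ℝ) → Matrix (Fin n) (Fin n) ℝ)
    (u : Fin n → (Fin n → ℝ) → ℝ)
    (hγ : ∀ i j : Fin n, ContDiffOn ℝ 1 (fun x => γ x i j) s)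
    (hγsymm : ∀ x ∈ s, (γ x).IsSymm)
    (hγinv : ∀ x ∈ s, IsUnit (γ x))
    (hu : ∀ j, ContDiffOn ℝ 2 (u j) s)
    (H : (Fin n → ℝ) → Matrix (Fin n) (Fin n) ℝ)
    (hH : ∀ x, H x = Matrix.of fun i j : Fin n => ∑ l, γ x i l * pd l (u j) x)
    (hHinv : ∀ x ∈ s, IsUnit (H x)) :
    ∀ x ∈ s, ∀ l p q : Fin n, p < q →
      pd q (fun y => (γ y)⁻¹ p l) x - pd p (fun y => (γ y)⁻¹ q l) x =
        ∑ i, ∑ j, (H x)⁻¹ i l *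
          ((γ x)⁻¹ q j * pd p (fun y => H y j i) x -
            (γ x)⁻¹ p j * pd q (fun y => H y j i) x) := by
  intro x hx l p q hpq
  have hmem := hs.mem_nhds hx
  -- differentiability of the entries of γ at x
  have hγd : ∀ a b, DifferentiableAt ℝ (fun y => γ y a b) x := fun a b =>
    ((hγ a b).contDiffAt hmem).differentiableAt one_ne_zero
  have hdet : (γ x).det ≠ 0 := by
    have := (Matrix.isUnit_iff_isUnit_det _).mp (hγinv x hx)
    exact this.ne_zero
  have hγinvd : ∀ a b, DifferentiableAt ℝ (fun y => (γ y)⁻¹ a b) x :=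
    fun a b => diffAt_inv_entry hγd hdet a b
  -- differentiability of pd l (u i)
  have hui : ∀ i, ContDiffAt ℝ 2 (u i) x := fun i => (hu i).contDiffAt hmem
  have hpdud : ∀ (m i : Fin n), DifferentiableAt ℝ (fun y => pd m (u i) y) x := by
    intro m i
    have hdf : DifferentiableAt ℝ (fderiv ℝ (u i)) x :=
      ((hui i).fderiv_right (m := 1) (by norm_num)).differentiableAt one_ne_zero
    exact hdf.clm_apply (differentiableAt_const _)
  have hHd : ∀ a b, DifferentiableAt ℝ (fun y => H y a b) x := by
    intro a b
    have : (fun y => H y a b) = fun y => ∑ m, γ y a m * pd m (u b) y := by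
      funext y; rw [hH y]; rfl
    rw [this]
    exact DifferentiableAt.fun_sum fun m _ => (hγd a m).mul (hpdud m b)
  -- the key identity: γ⁻¹ H has columns ∇u
  have keyid : ∀ (r i : Fin n), ∀ y ∈ s,
      ∑ j, (γ y)⁻¹ r j * H y j i = pd r (u i) y := by
    intro r i y hy
    have hinv := Matrix.nonsing_inv_mul (γ y)
      ((Matrix.isUnit_iff_isUnit_det _).mp (hγinv y hy))
    have h1 : ∀ m, ∑ j, (γ y)⁻¹ r j * γ y j m
        = (1 : Matrix (Fin n) (Fin n) ℝ) r m := by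
      intro m; rw [← hinv]; simp [Matrix.mul_apply]
    have : ∑ j, (γ y)⁻¹ r j * H y j i
        = ∑ m, (∑ j, (γ y)⁻¹ r j * γ y j m) * pd m (u i) y := by
      simp only [hH y, Matrix.of_apply, Finset.mul_sum, Finset.sum_mul]
      rw [Finset.sum_comm]
      apply Finset.sum_congr rfl; intro m _
      apply Finset.sum_congr rfl; intro j _
      ring
    rw [this]
    simp [h1, Matrix.one_apply]
  -- differentiating the key identity
  have deriv_key : ∀ (r r' i : Fin n),
      ∑ j, (pd r' (fun y => (γ y)⁻¹ r j) x * H x j i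
          + (γ x)⁻¹ r j * pd r' (fun y => H y j i) x)
        = pd r' (fun y => pd r (u i) y) x := by
    intro r r' i
    have heq : (fun y => ∑ j, (γ y)⁻¹ r j * H y j i) =ᶠ[nhds x]
        (fun y => pd r (u i) y) :=
      Filter.eventuallyEq_of_mem hmem (fun y hy => keyid r i y hy)
    rw [← pd_congr_nhds heq,
      pd_sum _ (fun j _ => (hγinvd r j).fun_mul (hHd j i))]
    exact Finset.sum_congr rfl fun j _ => (pd_mul (hγinvd r j) (hHd j i)).symm
  -- Clairaut for u i
  have clairaut : ∀ i, pd q (fun y => pd p (u i) y) x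
      = pd p (fun y => pd q (u i) y) x := fun i => pd_pd_comm (hui i) p q
  -- the pointwise (in i) identity
  have Si : ∀ i, ∑ j, pd q (fun y => (γ y)⁻¹ p j) x * H x j i
      - ∑ j, pd p (fun y => (γ y)⁻¹ q j) x * H x j i
      = ∑ j, ((γ x)⁻¹ q j * pd p (fun y => H y j i) x
          - (γ x)⁻¹ p j * pd q (fun y => H y j i) x) := by
    intro i
    have e1 := deriv_key p q i
    have e2 := deriv_key q p i
    have e3 := clairaut i
    rw [Finset.sum_add_distrib] at e1 e2
    rw [Finset.sum_sub_distrib]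
    linarith
  -- summing against H⁻¹
  have hHmul : ∀ j, ∑ i, H x j i * (H x)⁻¹ i l
      = (1 : Matrix (Fin n) (Fin n) ℝ) j l := by
    intro j
    rw [← Matrix.mul_apply, Matrix.mul_nonsing_inv _
      ((Matrix.isUnit_iff_isUnit_det _).mp (hHinv x hx))]
  calc pd q (fun y => (γ y)⁻¹ p l) x - pd p (fun y => (γ y)⁻¹ q l) x
      = ∑ j, (pd q (fun y => (γ y)⁻¹ p j) x - pd p (fun y => (γ y)⁻¹ q j) x)
          * (1 : Matrix (Fin n) (Fin n) ℝ) j l := by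
        simp [Matrix.one_apply]
    _ = ∑ j, (pd q (fun y => (γ y)⁻¹ p j) x - pd p (fun y => (γ y)⁻¹ q j) x)
          * ∑ i, H x j i * (H x)⁻¹ i l := by
        simp only [hHmul]
    _ = ∑ i, (H x)⁻¹ i l
          * (∑ j, pd q (fun y => (γ y)⁻¹ p j) x * H x j i
            - ∑ j, pd p (fun y => (γ y)⁻¹ q j) x * H x j i) := by
        simp only [Finset.mul_sum]
        rw [Finset.sum_comm]
        refine Finset.sum_congr rfl fun i _ => ?_
        rw [mul_sub, Finset.mul_sum, Finset.mul_sum, ← Finset.sum_sub_distrib]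
        exact Finset.sum_congr rfl fun j _ => by ring
    _ = ∑ i, ∑ j, (H x)⁻¹ i l *
          ((γ x)⁻¹ q j * pd p (fun y => H y j i) x -
            (γ x)⁻¹ p j * pd q (fun y => H y j i) x) := by
        refine Finset.sum_congr rfl fun i _ => ?_
        rw [Si i, Finset.mul_sum]
end

section
/- Let γ be a C¹ symmetric positive-definite matrix field on open X ⊂ ℝⁿ, u₁,…,uₙ solutions of ∇·(γ∇u)=0 with pointwise linearly independent gradients, H the matrix with columns γ∇uⱼ, u_{n+k} an additional solution with decomposition coefficients μₖⁱ and Zₖ the matrix with columns ∇μₖⁱ. Then at each point, the matrix γ̃·Zₖ·Hᵀ is symmetric, where γ̃ = (det γ)^{-1/n}·γ (equivalently, γ·Zₖ·Hᵀ is symmetric). -/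
open Matrix

lemma hasFDerivAt_pd {n : ℕ} (k : Fin n) (f : (Fin n → ℝ) → ℝ) (x : Fin n → ℝ)
    (hf : ContDiffAt ℝ 2 f x) :
    HasFDerivAt (pd k f)
      ((ContinuousLinearMap.apply ℝ ℝ (Pi.single k 1)).comp
        (fderiv ℝ (fderiv ℝ f) x)) x := by
  have hd : DifferentiableAt ℝ (fderiv ℝ f) x :=
    (hf.fderiv_right (m := 1) le_rfl).differentiableAt one_ne_zero
  exact (ContinuousLinearMap.apply ℝ ℝ (Pi.single k 1)).hasFDerivAt.comp x hd.hasFDerivAt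

lemma pd_pd_eq {n : ℕ} (l k : Fin n) (f : (Fin n → ℝ) → ℝ) (x : Fin n → ℝ)
    (hf : ContDiffAt ℝ 2 f x) :
    pd l (pd k f) x = fderiv ℝ (fderiv ℝ f) x (Pi.single l 1) (Pi.single k 1) := by
  have := (hasFDerivAt_pd k f x hf).fderiv
  simp [pd, this]

lemma pd_pd_symm {n : ℕ} (l k : Fin n) (f : (Fin n → ℝ) → ℝ) (x : Fin n → ℝ)
    (hf : ContDiffAt ℝ 2 f x) :
    pd l (pd k f) x = pd k (pd l f) x := by
  rw [pd_pd_eq l k f x hf, pd_pd_eq k l f x hf]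
  exact (hf.isSymmSndFDerivAt (by norm_num)) _ _

theorem stmt_17 {n : ℕ} (hn : 0 < n) (s : Set (Fin n → ℝ)) (hs : IsOpen s)
    (γ : (Fin n → ℝ) → Matrix (Fin n) (Fin n) ℝ)
    (hγreg : ∀ i j : Fin n, ContDiffOn ℝ 1 (fun x => γ x i j) s)
    (hγpd : ∀ x ∈ s, (γ x).PosDef) (hγsymm : ∀ x ∈ s, (γ x).IsSymm)
    (u : Fin n → (Fin n → ℝ) → ℝ) (hu : ∀ j, ContDiffOn ℝ 2 (u j) s)
    -- the uⱼ solve the conductivity equation ∇·(γ∇uⱼ) = 0 on s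
    (hsol : ∀ j, ∀ x ∈ s,
      ∑ k, pd k (fun y => ∑ l, γ y k l * pd l (u j) y) x = 0)
    -- the gradients ∇u₁, …, ∇uₙ are linearly independent at each point of s
    (hbasis : ∀ x ∈ s, IsUnit (Matrix.of fun k i : Fin n => pd k (u i) x).det)
    -- `w = u_{n+k}` is an additional solution, with C¹ decomposition
    -- coefficients μ: ∇w = Σᵢ μᵢ ∇uᵢ
    (w : (Fin n → ℝ) → ℝ) (hw : ContDiffOn ℝ 2 w s)
    (hwsol : ∀ x ∈ s, ∑ k, pd k (fun y => ∑ l, γ y k l * pd l w y) x = 0)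
    (μ : Fin n → (Fin n → ℝ) → ℝ) (hμ : ∀ i, ContDiffOn ℝ 1 (μ i) s)
    (hdecomp : ∀ x ∈ s, ∀ k : Fin n, pd k w x = ∑ i, μ i x * pd k (u i) x)
    (H Z : (Fin n → ℝ) → Matrix (Fin n) (Fin n) ℝ)
    (hH : ∀ x, H x = γ x * Matrix.of fun k i : Fin n => pd k (u i) x)
    (hZ : ∀ x, Z x = Matrix.of fun k i : Fin n => pd k (μ i) x) :
    ∀ x ∈ s,
      (Real.rpow ((γ x).det) (-(1 : ℝ) / n) • (γ x * Z x * (H x)ᵀ)).IsSymm ∧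
        (γ x * Z x * (H x)ᵀ).IsSymm := by
  intro x hx
  have hxs : s ∈ nhds x := hs.mem_nhds hx
  have hwA : ContDiffAt ℝ 2 w x := (hw x hx).contDiffAt hxs
  have huA : ∀ i, ContDiffAt ℝ 2 (u i) x := fun i => ((hu i) x hx).contDiffAt hxs
  have hμA : ∀ i, ContDiffAt ℝ 1 (μ i) x := fun i => ((hμ i) x hx).contDiffAt hxs
  have hμd : ∀ i, DifferentiableAt ℝ (μ i) x :=
    fun i => (hμA i).differentiableAt one_ne_zero
  have hpdud : ∀ i (k : Fin n), DifferentiableAt ℝ (pd k (u i)) x :=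
    fun i k => (hasFDerivAt_pd k (u i) x (huA i)).differentiableAt
  have main : ∀ l k : Fin n, pd l (pd k w) x
      = ∑ i, (μ i x * pd l (pd k (u i)) x + pd k (u i) x * pd l (μ i) x) := by
    intro l k
    have hEq : pd k w =ᶠ[nhds x] fun y => ∑ i, μ i y * pd k (u i) y := by
      filter_upwards [hxs] with y hy
      exact hdecomp y hy k
    have hF : HasFDerivAt (fun y => ∑ i, μ i y * pd k (u i) y)
        (∑ i, (μ i x • fderiv ℝ (pd k (u i)) x + pd k (u i) x • fderiv ℝ (μ i) x)) x :=
      HasFDerivAt.fun_sum fun i _ =>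
        (hμd i).hasFDerivAt.mul (hpdud i k).hasFDerivAt
    show fderiv ℝ (pd k w) x (Pi.single l 1) = _
    rw [hEq.fderiv_eq, hF.fderiv]
    simp [pd, ContinuousLinearMap.sum_apply, mul_comm]
  have key : ∀ l k : Fin n,
      ∑ i, pd l (μ i) x * pd k (u i) x = ∑ i, pd k (μ i) x * pd l (u i) x := by
    intro l k
    have h1 := main l k
    have h2 := main k l
    rw [Finset.sum_add_distrib] at h1 h2
    rw [pd_pd_symm l k w x hwA] at h1
    have hsum : ∑ i, μ i x * pd l (pd k (u i)) x
        = ∑ i, μ i x * pd k (pd l (u i)) x :=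
      Finset.sum_congr rfl fun i _ => by rw [pd_pd_symm l k (u i) x (huA i)]
    rw [hsum] at h1
    have h3 := add_left_cancel (h1.symm.trans h2)
    exact (Finset.sum_congr rfl fun i _ => mul_comm _ _).trans
      (h3.trans (Finset.sum_congr rfl fun i _ => mul_comm _ _))
  have hA : (Matrix.of (fun k i : Fin n => pd k (μ i) x)
      * (Matrix.of fun k i : Fin n => pd k (u i) x)ᵀ).IsSymm := by
    ext l k
    simp only [Matrix.transpose_apply, Matrix.mul_apply, Matrix.of_apply]
    exact key k l
  have hfact : γ x * Z x * (H x)ᵀ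
      = γ x * (Matrix.of (fun k i : Fin n => pd k (μ i) x)
          * (Matrix.of fun k i : Fin n => pd k (u i) x)ᵀ) * (γ x)ᵀ := by
    rw [hH, hZ, Matrix.transpose_mul]
    noncomm_ring [Matrix.mul_assoc]
  have hsymm : (γ x * Z x * (H x)ᵀ).IsSymm := by
    rw [hfact]
    unfold Matrix.IsSymm
    rw [Matrix.transpose_mul, Matrix.transpose_mul, Matrix.transpose_transpose,
      hA, hγsymm x hx]
    simp [Matrix.mul_assoc]
  exact ⟨by unfold Matrix.IsSymm; rw [Matrix.transpose_smul, hsymm], hsymm⟩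
end
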